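/- Let G be a graph, C a longest cycle with an orientation, and z a vertex not on C with all neighbors on C. Then N(z) and N^+(z) are disjoint, and hence the order of C is at least 2·d(z). -/

import Mathlib

open SimpleGraph

variable {V : Type*} [Fintype V] [DecidableEq V]

/-- The order (number of vertices) of a longest path in `G`. -/
noncomputable def pathOrder (G : SimpleGraph V) : ℕ :=
  sSup {n | ∃ (u v : V) (w : G.Walk u v), w.IsPath ∧ n = w.length + 1}

/-- The order (number of vertices) of a longest cycle in `G`. -/
noncomputable def cycleOrder (G : SimpleGraph V) : ℕ :=
  sSup {n | ∃ (u : V) (w : G.Walk u u), w.IsCycle ∧ n = w.length}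

/-- `G` is `k`-connected: more than `k` vertices and deleting any fewer than `k`
vertices leaves a connected graph. -/
def IsKConnected (G : SimpleGraph V) (k : ℕ) : Prop :=
  k < Fintype.card V ∧
    ∀ S : Finset V, S.card < k → (G.induce {v | v ∉ S}).Connected

/-- The vertex connectivity of `G`. -/
noncomputable def connectivity (G : SimpleGraph V) : ℕ :=
  sSup {k | IsKConnected G k}

/-- The successor of `v` on the closed walk `w` (with the orientation of `w`). -/
def cycSucc {G : SimpleGraph V} {u : V} (w : G.Walk u u) (v : V) : V :=
  w.getVert (w.support.idxOf v + 1)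

/-- The predecessor of `v` on the closed walk `w`. -/
def cycPred {G : SimpleGraph V} {u : V} (w : G.Walk u u) (v : V) : V :=
  cycSucc w.reverse v

/-- The predecessor of `v` on the path `w`, oriented from `x` to `y`. -/
def pathPred {G : SimpleGraph V} {x y : V} (w : G.Walk x y) (v : V) : V :=
  w.getVert (w.support.idxOf v - 1)

section Aux

set_option linter.unusedSectionVars false

variable {G : SimpleGraph V}

private lemma support_getElem {u v : V} (p : G.Walk u v) (i : ℕ) (h : i < p.support.length) :
    p.support[i] = p.getVert i := by
  induction p generalizing i with
  | nil =>
    simp only [Walk.support_nil, List.length_singleton] at h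
    interval_cases i
    simp
  | cons h p ih =>
    cases i with
    | zero => simp
    | succ n =>
      simp only [Walk.support_cons, Walk.getVert_cons_succ]
      rw [List.getElem_cons_succ]
      exact ih n (by simpa [Walk.length_support] using
        (by simpa [Walk.length_support] using h : n + 1 < p.length + 2))

private lemma getVert_indexOf {u v b : V} (p : G.Walk u v) (hb : b ∈ p.support) :
    p.getVert (p.support.idxOf b) = b := by
  have h : p.support.idxOf b < p.support.length := List.idxOf_lt_length_iff.2 hb
  rw [← support_getElem p _ h, List.getElem_idxOf]

private lemma cycle_getVert_inj {u : V} {w : G.Walk u u} (hw : w.IsCycle) {i j : ℕ}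
    (hi : 1 ≤ i) (hi' : i ≤ w.length) (hj : 1 ≤ j) (hj' : j ≤ w.length)
    (h : w.getVert i = w.getVert j) : i = j := by
  have hnd : w.support.tail.Nodup := hw.2
  have hlen : w.support.tail.length = w.length := by
    simp [Walk.length_support]
  have hi2 : i - 1 < w.support.tail.length := by omega
  have hj2 : j - 1 < w.support.tail.length := by omega
  have e1 : w.support.tail[i-1] = w.getVert i := by
    rw [List.getElem_tail, support_getElem]
    congr 1
    omega
  have e2 : w.support.tail[j-1] = w.getVert j := by
    rw [List.getElem_tail, support_getElem]
    congr 1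
    omega
  have := (hnd.getElem_inj_iff (hi := hi2) (hj := hj2)).1 (by rw [e1, e2, h])
  omega

private lemma indexOf_lt_length_cycle {u b : V} {w : G.Walk u u} (hw : w.IsCycle)
    (hb : b ∈ w.support) : w.support.idxOf b < w.length := by
  have h3 := hw.three_le_length
  have h : w.support.idxOf b < w.support.length := List.idxOf_lt_length_iff.2 hb
  rw [Walk.length_support] at h
  rcases Nat.lt_or_ge (w.support.idxOf b) w.length with h' | h'
  · exact h'
  · exfalso
    have hix : w.support.idxOf b = w.length := by omega
    have hgv : w.getVert (w.support.idxOf b) = b := getVert_indexOf w hb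
    rw [hix, Walk.getVert_length] at hgv
    subst hgv
    have h0 : w.support.idxOf u = 0 := by
      conv_lhs => rw [w.support_eq_cons]
      exact List.idxOf_cons_self
    omega

private lemma exists_rotated {u b : V} {w : G.Walk u u} (hw : w.IsCycle) (hb : b ∈ w.support) :
    ∃ c : G.Walk b b, c.IsCycle ∧ c.length = w.length ∧
      (∀ x, x ∈ c.support ↔ x ∈ w.support) ∧ c.getVert 1 = cycSucc w b := by
  by_cases hbu : b = u
  · subst hbu
    refine ⟨w, hw, rfl, fun _ => Iff.rfl, ?_⟩
    have h0 : w.support.idxOf b = 0 := by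
      conv_lhs => rw [w.support_eq_cons]
      exact List.idxOf_cons_self
    rw [cycSucc, h0]
  · set t := w.takeUntil b hb with ht
    set d := w.dropUntil b hb with hd
    have hspec : t.append d = w := w.take_spec hb
    have hlen : t.length + d.length = w.length := by
      rw [← Walk.length_append, hspec]
    have hixlt : w.support.idxOf b < w.length := indexOf_lt_length_cycle hw hb
    have hwt : w.getVert t.length = b := by
      conv_lhs => rw [← hspec]
      rw [Walk.getVert_append]
      simp
    have htlt : t.length < w.length := by
      rcases Nat.lt_or_ge t.length w.length with h | h
      · exact h
      · exfalso
        have := w.length_takeUntil_le hb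
        have h2 : t.length = w.length := by omega
        rw [h2, Walk.getVert_length] at hwt
        exact hbu hwt.symm
    have htix : t.length = w.support.idxOf b := by
      have hne1 : t.length ≠ 0 := by
        intro h0
        rw [h0, Walk.getVert_zero] at hwt
        exact hbu hwt.symm
      have hne2 : w.support.idxOf b ≠ 0 := by
        intro h0
        have := getVert_indexOf w hb
        rw [h0, Walk.getVert_zero] at this
        exact hbu this.symm
      exact cycle_getVert_inj hw (by omega) (by omega) (by omega) (by omega)
        (by rw [hwt, getVert_indexOf w hb])
    have hrot : w.rotate b hb = d.append t := rfl
    refine ⟨w.rotate b hb, hw.rotate hb, ?_, ?_, ?_⟩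
    · rw [hrot, Walk.length_append]; omega
    · intro x
      rw [hrot, Walk.mem_support_append_iff]
      conv_rhs => rw [← hspec]
      rw [Walk.mem_support_append_iff]
      tauto
    · have hsucc : cycSucc w b = d.getVert 1 := by
        rw [cycSucc, ← htix]
        conv_lhs => rw [← hspec]
        rw [Walk.getVert_append]
        simp
      rw [hrot, hsucc, Walk.getVert_append]
      split_ifs with h1
      · rfl
      · have hd1 : d.length = 1 := by omega
        rw [hd1, show (1:ℕ) - 1 = 0 from rfl, Walk.getVert_zero, ← hd1, Walk.getVert_length]

end Aux

/-- For a longest cycle `C` and `z ∉ V(C)` with `N(z) ⊆ V(C)`, the sets `N(z)`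
and `N(z)⁺` are disjoint, hence `|C| ≥ 2 d(z)`. -/
theorem stmt13 (G : SimpleGraph V) [DecidableRel G.Adj]
    {u : V} (w : G.Walk u u) (hw : w.IsCycle)
    (hmax : ∀ (v : V) (w' : G.Walk v v), w'.IsCycle → w'.length ≤ w.length)
    {z : V} (hz : z ∉ w.support) (hnbr : ∀ v, G.Adj z v → v ∈ w.support) :
    (∀ a b, G.Adj z a → G.Adj z b → a ≠ cycSucc w b) ∧
    2 * G.degree z ≤ w.length := by
  have h3 := hw.three_le_length
  have part1 : ∀ a b, G.Adj z a → G.Adj z b → a ≠ cycSucc w b := by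
    intro a b ha hb heq
    obtain ⟨c, hc, hclen, hcsup, hc1⟩ := exists_rotated hw (hnbr b hb)
    rw [← hc1] at heq
    subst heq
    have hnn : ¬ c.Nil := by rw [Walk.not_nil_iff_lt_length]; omega
    have hzc : z ∉ c.support := fun h => hz ((hcsup z).1 h)
    have hztail : z ∉ c.tail.support := by
      rw [Walk.support_tail_of_not_nil c hnn]
      intro h
      exact hzc (List.mem_of_mem_tail h)
    have hcc := c.cons_tail_eq hnn
    have hc' : (Walk.cons (c.adj_snd hnn) c.tail).IsCycle := by
      rw [hcc]; exact hc
    rw [Walk.cons_isCycle_iff] at hc'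
    obtain ⟨hpath, -⟩ := hc'
    -- the extended path from c.getVert 1 to z
    have hq : (c.tail.concat hb.symm).IsPath := by
      rw [← Walk.isPath_reverse_iff, Walk.reverse_concat, Walk.cons_isPath_iff]
      constructor
      · rw [Walk.isPath_reverse_iff]; exact hpath
      · rw [Walk.support_reverse, List.mem_reverse]
        exact hztail
    have hcyc2 : (Walk.cons ha (c.tail.concat hb.symm)).IsCycle := by
      rw [Walk.cons_isCycle_iff]
      refine ⟨hq, ?_⟩
      intro hmem
      rw [Walk.edges_concat, List.concat_eq_append, List.mem_append] at hmem
      rcases hmem with h1 | h1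
      · exact hztail (Walk.fst_mem_support_of_mem_edges c.tail h1)
      · rw [List.mem_singleton, Sym2.eq_iff] at h1
        rcases h1 with ⟨h1a, h1b⟩ | ⟨h1a, h1b⟩
        · exact hz (h1a ▸ hnbr b hb)
        · exact (c.adj_snd hnn).ne' h1b
    have hle := hmax z _ hcyc2
    rw [Walk.length_cons, Walk.length_concat] at hle
    have hct : c.tail.length + 1 = c.length := Walk.length_tail_add_one hnn
    omega
  refine ⟨part1, ?_⟩
  classical
  set N := G.neighborFinset z with hN
  set M := N.image (cycSucc w) with hM
  have hu_tail : u ∈ w.support.tail := by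
    have hlt : w.length - 1 < w.support.tail.length := by
      simp only [List.length_tail, Walk.length_support]
      omega
    have he : w.support.tail[w.length - 1] = u := by
      rw [List.getElem_tail, support_getElem]
      rw [show w.length - 1 + 1 = w.length by omega, Walk.getVert_length]
    have hmem := List.getElem_mem hlt
    rwa [he] at hmem
  have mem_tail : ∀ x ∈ w.support, x ∈ w.support.tail := by
    intro x hx
    rw [w.support_eq_cons] at hx
    rcases List.mem_cons.1 hx with rfl | hx
    · exact hu_tail
    · exact hx
  have hNsub : N ⊆ w.support.tail.toFinset := by
    intro x hx
    rw [List.mem_toFinset]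
    exact mem_tail x (hnbr x (G.mem_neighborFinset z x |>.1 hx))
  have hMsub : M ⊆ w.support.tail.toFinset := by
    intro x hx
    rw [hM, Finset.mem_image] at hx
    obtain ⟨y, hy, rfl⟩ := hx
    rw [List.mem_toFinset]
    apply mem_tail
    have hyidx := indexOf_lt_length_cycle hw (hnbr y (G.mem_neighborFinset z y |>.1 hy))
    rw [Walk.mem_support_iff_exists_getVert]
    exact ⟨w.support.idxOf y + 1, rfl, by omega⟩
  have hdisj : Disjoint N M := by
    rw [Finset.disjoint_left]
    intro x hx hmx
    rw [hM, Finset.mem_image] at hmx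
    obtain ⟨y, hy, hxy⟩ := hmx
    exact part1 x y (G.mem_neighborFinset z x |>.1 hx)
      (G.mem_neighborFinset z y |>.1 hy) hxy.symm
  have hMcard : M.card = N.card := by
    rw [hM]
    apply Finset.card_image_of_injOn
    intro x hx y hy hxy
    have hxs := hnbr x (G.mem_neighborFinset z x |>.1 hx)
    have hys := hnbr y (G.mem_neighborFinset z y |>.1 hy)
    have hxi := indexOf_lt_length_cycle hw hxs
    have hyi := indexOf_lt_length_cycle hw hys
    have := cycle_getVert_inj hw (i := w.support.idxOf x + 1)
      (j := w.support.idxOf y + 1) (by omega) (by omega) (by omega) (by omega) hxy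
    have hxe : w.getVert (w.support.idxOf x) = x := getVert_indexOf w hxs
    have hye : w.getVert (w.support.idxOf y) = y := getVert_indexOf w hys
    rw [← hxe, ← hye]
    congr 1
    omega
  have hcard : (N ∪ M).card ≤ w.support.tail.toFinset.card :=
    Finset.card_le_card (Finset.union_subset hNsub hMsub)
  rw [Finset.card_union_of_disjoint hdisj, hMcard,
    List.toFinset_card_of_nodup hw.2] at hcard
  have hlen : w.support.tail.length = w.length := by
    simp [Walk.length_support]
  have hdeg : G.degree z = N.card := rfl
  omega
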